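/- arXiv:1701.02228 — 2 statements merged into one kernel-verified Lean document; each statement's English description precedes it below -/
import Mathlib

section
/- Let X and Y be independent random variables such that (X, Y) has a spherically symmetric distribution in R^2. Then P(X = 0) is either 0 or 1. -/
open MeasureTheory

/-- A random vector `X` taking values in `ℝⁿ` is spherically symmetric (w.r.t. `μ`) if
`X` and `H ⬝ X` are identically distributed for every `n × n` real orthogonal matrix `H`. -/
def SphericallySymmetric {Ω : Type*} [MeasurableSpace Ω] (μ : Measure Ω)
    {n : ℕ} (X : Ω → Fin n → ℝ) : Prop :=
  ∀ H : Matrix (Fin n) (Fin n) ℝ, H ∈ Matrix.orthogonalGroup (Fin n) ℝ →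
    Measure.map (fun ω => H.mulVec (X ω)) μ = Measure.map X μ

lemma orth_aux (a b : ℝ) (h : a ^ 2 + b ^ 2 = 1) :
    (!![a, -b; b, a]) ∈ Matrix.orthogonalGroup (Fin 2) ℝ := by
  rw [Matrix.mem_orthogonalGroup_iff]
  ext i j
  fin_cases i <;> fin_cases j <;>
    simp [Matrix.mul_apply, Fin.sum_univ_two, Matrix.star_eq_conjTranspose,
      Matrix.conjTranspose_apply, Matrix.one_apply, Matrix.vecHead, Matrix.vecTail] <;>
    nlinarith [h]

theorem stmt_6 {Ω : Type*} [MeasurableSpace Ω] (μ : Measure Ω) [IsProbabilityMeasure μ]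
    (X Y : Ω → ℝ) (hX : Measurable X) (hY : Measurable Y)
    (hindep : ProbabilityTheory.IndepFun X Y μ)
    (hsym : SphericallySymmetric μ (fun ω => ![X ω, Y ω])) :
    μ {ω | X ω = 0} = 0 ∨ μ {ω | X ω = 0} = 1 := by
  classical
  set p := μ {ω | X ω = 0} with hp
  have hXY : Measurable fun ω => ![X ω, Y ω] := by
    rw [measurable_pi_iff]; intro i; fin_cases i <;> simpa
  have hS : MeasurableSet {v : Fin 2 → ℝ | v 0 = 0} := by
    have : {v : Fin 2 → ℝ | v 0 = 0} = (fun v : Fin 2 → ℝ => v 0) ⁻¹' {0} := rfl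
    rw [this]; exact (measurable_pi_apply 0) (measurableSet_singleton 0)
  -- generic lemma to extract marginal equality from spherical symmetry
  have main : ∀ H : Matrix (Fin 2) (Fin 2) ℝ, H ∈ Matrix.orthogonalGroup (Fin 2) ℝ →
      μ {ω | H 0 0 * X ω + H 0 1 * Y ω = 0} = p := by
    intro H hH
    have hf : Measurable fun ω => H.mulVec ![X ω, Y ω] := by
      rw [measurable_pi_iff]; intro i
      simp only [Matrix.mulVec, dotProduct, Fin.sum_univ_two,
        Matrix.cons_val_zero, Matrix.cons_val_one, Matrix.head_cons]
      exact ((hX.const_mul _).add (hY.const_mul _))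
    have hmeq := hsym H hH
    have h1 : Measure.map (fun ω => H.mulVec ![X ω, Y ω]) μ {v | v 0 = 0}
        = Measure.map (fun ω => ![X ω, Y ω]) μ {v | v 0 = 0} := by rw [hmeq]
    rw [Measure.map_apply hf hS, Measure.map_apply hXY hS] at h1
    have e1 : (fun ω => H.mulVec ![X ω, Y ω]) ⁻¹' {v | v 0 = 0}
        = {ω | H 0 0 * X ω + H 0 1 * Y ω = 0} := by
      ext ω
      simp [Matrix.mulVec, dotProduct, Fin.sum_univ_two]
    have e2 : (fun ω => ![X ω, Y ω]) ⁻¹' {v | v 0 = 0} = {ω | X ω = 0} := by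
      ext ω; simp
    rw [e1, e2] at h1
    exact h1
  -- P(Y = 0) = p
  have hq : μ {ω | Y ω = 0} = p := by
    have horth : (!![(0:ℝ), -1; 1, 0]) ∈ Matrix.orthogonalGroup (Fin 2) ℝ :=
      orth_aux 0 1 (by norm_num)
    have h := main _ horth
    have e : {ω | (!![(0:ℝ), -1; 1, 0]) 0 0 * X ω
        + (!![(0:ℝ), -1; 1, 0]) 0 1 * Y ω = 0} = {ω | Y ω = 0} := by
      ext ω
      have h00 : (!![(0:ℝ), -1; 1, 0]) 0 0 = 0 := by simp
      have h01 : (!![(0:ℝ), -1; 1, 0]) 0 1 = -1 := by simp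
      rw [Set.mem_setOf_eq, Set.mem_setOf_eq, h00, h01]
      constructor
      · intro h'; linarith
      · intro h'; rw [h']; ring
    rwa [e] at h
  -- P(X = t * Y) = p for every t
  have key : ∀ t : ℝ, μ {ω | X ω = t * Y ω} = p := by
    intro t
    set s : ℝ := Real.sqrt (1 + t ^ 2) with hs
    have hspos : (0 : ℝ) < s := Real.sqrt_pos.2 (by positivity)
    have hss : s * s = 1 + t ^ 2 := Real.mul_self_sqrt (by positivity)
    set c : ℝ := s⁻¹ with hcdef
    have hcpos : (0 : ℝ) < c := by positivity
    have hc2 : c ^ 2 + (c * t) ^ 2 = 1 := by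
      have : c ^ 2 * (1 + t ^ 2) = 1 := by
        have hne : s ≠ 0 := hspos.ne'
        rw [hcdef, ← hss]
        field_simp
      nlinarith [this]
    have horth : (!![c, -(c * t); c * t, c]) ∈ Matrix.orthogonalGroup (Fin 2) ℝ :=
      orth_aux c (c * t) hc2
    have h := main _ horth
    have e : {ω | (!![c, -(c * t); c * t, c]) 0 0 * X ω
        + (!![c, -(c * t); c * t, c]) 0 1 * Y ω = 0} = {ω | X ω = t * Y ω} := by
      ext ω
      have h00 : (!![c, -(c * t); c * t, c]) 0 0 = c := by simp
      have h01 : (!![c, -(c * t); c * t, c]) 0 1 = -(c * t) := by simp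
      rw [Set.mem_setOf_eq, Set.mem_setOf_eq, h00, h01]
      have hrw : c * X ω + -(c * t) * Y ω = c * (X ω - t * Y ω) := by ring
      rw [hrw, mul_eq_zero, sub_eq_zero]
      simp [hcpos.ne']
    rwa [e] at h
  -- measurable level sets
  have hAmble : ∀ t : ℝ, MeasurableSet {ω | X ω = t * Y ω} := fun t =>
    measurableSet_eq_fun hX (hY.const_mul t)
  have hY0 : MeasurableSet {ω | Y ω = 0} := hY (measurableSet_singleton 0)
  -- disjoint family
  set A : ℝ → Set Ω := fun t => {ω | X ω = t * Y ω} ∩ {ω | Y ω ≠ 0} with hA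
  have hAdisj : Pairwise (Function.onFun Disjoint A) := by
    intro a b hab
    rw [Function.onFun, Set.disjoint_left]
    rintro ω ⟨h1, h2⟩ ⟨h3, _⟩
    exact hab (mul_right_cancel₀ h2 (h1.symm.trans h3))
  have hAm : ∀ t, MeasurableSet (A t) := fun t => (hAmble t).inter hY0.compl
  have hcount : Set.Countable {t : ℝ | 0 < μ (A t)} :=
    Measure.countable_meas_pos_of_disjoint_iUnion hAm hAdisj
  obtain ⟨t, ht⟩ : ∃ t : ℝ, μ (A t) = 0 := by
    by_contra hcon
    push_neg at hcon
    have huniv : {t : ℝ | 0 < μ (A t)} = Set.univ :=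
      Set.eq_univ_of_forall fun t => (zero_le (a := μ (A t))).lt_of_ne (Ne.symm (hcon t))
    rw [huniv] at hcount
    exact Cardinal.not_countable_real hcount
  -- P(X = tY) = P(X = 0, Y = 0)
  have hsplit : μ {ω | X ω = t * Y ω} = μ ({ω | X ω = 0} ∩ {ω | Y ω = 0}) := by
    have h1 : {ω | X ω = t * Y ω} = A t ∪ ({ω | X ω = 0} ∩ {ω | Y ω = 0}) := by
      ext ω
      simp only [hA, Set.mem_setOf_eq, Set.mem_union, Set.mem_inter_iff]
      constructor
      · intro h
        by_cases hy : Y ω = 0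
        · right; exact ⟨by rw [h, hy, mul_zero], hy⟩
        · left; exact ⟨h, hy⟩
      · rintro (⟨h, _⟩ | ⟨h1, h2⟩)
        · exact h
        · rw [h1, h2, mul_zero]
    rw [h1]
    refine le_antisymm ?_ (measure_mono Set.subset_union_right)
    calc μ (A t ∪ ({ω | X ω = 0} ∩ {ω | Y ω = 0}))
        ≤ μ (A t) + μ ({ω | X ω = 0} ∩ {ω | Y ω = 0}) := measure_union_le _ _
      _ = μ ({ω | X ω = 0} ∩ {ω | Y ω = 0}) := by rw [ht, zero_add]
  -- independence
  have hind : μ ({ω | X ω = 0} ∩ {ω | Y ω = 0}) = p * p := by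
    have h := hindep.measure_inter_preimage_eq_mul {0} {0}
      (measurableSet_singleton 0) (measurableSet_singleton 0)
    have e1 : X ⁻¹' {0} = {ω | X ω = 0} := rfl
    have e2 : Y ⁻¹' {0} = {ω | Y ω = 0} := rfl
    rw [e1, e2] at h
    rw [h, hq, hp]
  have hpp : p = p * p := by
    rw [← hind, ← hsplit, key t]
  -- conclude
  by_cases h0 : p = 0
  · left; exact h0
  · right
    have hfin : p ≠ ⊤ := (measure_lt_top μ _).ne
    have h1 : p * 1 = p * p := by rw [mul_one, ← hpp]
    exact ((ENNReal.mul_right_inj h0 hfin).1 h1).symm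
end

section
/- Let φ: R → C be a characteristic function (of some real random variable) satisfying φ(s)φ(t) = φ(√(s² + t²)) for all s, t ∈ R. Then φ(t) > 0 for all t ∈ R (in particular φ is real-valued and strictly positive). -/
open MeasureTheory Filter

theorem stmt_17 {Ω : Type*} [MeasurableSpace Ω] (μ : Measure Ω) [IsProbabilityMeasure μ]
    (X : Ω → ℝ) (hX : Measurable X) (φ : ℝ → ℂ)
    (hφ : ∀ t : ℝ, φ t = ∫ ω, Complex.exp (Complex.I * (t * X ω : ℝ)) ∂μ)
    (heq : ∀ s t : ℝ, φ s * φ t = φ (Real.sqrt (s ^ 2 + t ^ 2))) :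
    ∀ t : ℝ, (φ t).im = 0 ∧ 0 < (φ t).re := by
  have h0 : φ 0 = 1 := by
    rw [hφ]
    simp
  -- conjugate
  have hconj : ∀ s, φ (-s) = starRingEnd ℂ (φ s) := by
    intro s
    rw [hφ, hφ, ← integral_conj]
    congr 1; ext ω
    rw [← Complex.exp_conj]
    congr 1
    simp [Complex.ext_iff]
  -- real
  have him : ∀ s, (φ s).im = 0 := by
    intro s
    have h1 : φ s * φ s = φ (-s) * φ s := by
      rw [heq, heq]
      ring_nf
    rw [hconj s] at h1
    have hre := congrArg Complex.re h1
    simp only [Complex.mul_re, Complex.conj_re, Complex.conj_im] at hre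
    nlinarith [sq_nonneg ((φ s).im)]
  have heven : ∀ s, φ (-s) = φ s := by
    intro s
    rw [hconj s, Complex.conj_eq_iff_im.2 (him s)]
  have habs : ∀ s : ℝ, φ |s| = φ s := by
    intro s
    rcases abs_choice s with h | h
    · rw [h]
    · rw [h, heven]
  have hs2 : (0:ℝ) < Real.sqrt 2 := by positivity
  -- square identity
  have hsq : ∀ t : ℝ, φ (t / Real.sqrt 2) * φ (t / Real.sqrt 2) = φ t := by
    intro t
    rw [heq]
    have harg : (t / Real.sqrt 2) ^ 2 + (t / Real.sqrt 2) ^ 2 = t ^ 2 := by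
      rw [div_pow, Real.sq_sqrt (by norm_num : (0:ℝ) ≤ 2)]
      ring
    rw [harg, Real.sqrt_sq_eq_abs, habs]
  -- nonnegativity
  have hnn : ∀ t : ℝ, 0 ≤ (φ t).re := by
    intro t
    have := congrArg Complex.re (hsq t)
    simp only [Complex.mul_re, him, mul_zero, sub_zero] at this
    rw [← this]
    exact mul_self_nonneg _
  -- continuity at 0 along sequences (dominated convergence)
  have hcont : ∀ u : ℕ → ℝ, Tendsto u atTop (nhds 0) →
      Tendsto (fun n => φ (u n)) atTop (nhds 1) := by
    intro u hu
    have key : Tendsto (fun n => ∫ ω, Complex.exp (Complex.I * (u n * X ω : ℝ)) ∂μ)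
        atTop (nhds (∫ _ : Ω, (1:ℂ) ∂μ)) := by
      apply tendsto_integral_filter_of_dominated_convergence (fun _ => (1:ℝ))
      · filter_upwards with n
        exact ((measurable_const.mul
          (Complex.measurable_ofReal.comp (hX.const_mul (u n)))).cexp).aestronglyMeasurable
      · filter_upwards with n
        filter_upwards with ω
        rw [Complex.norm_exp]
        simp
      · exact integrable_const 1
      · filter_upwards with ω
        have h1 : Tendsto (fun n => u n * X ω) atTop (nhds 0) := by
          simpa using hu.mul_const (X ω)
        have h2 : Tendsto (fun n => (Complex.I * (u n * X ω : ℝ) : ℂ)) atTop (nhds 0) := by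
          have h3 := (Complex.continuous_ofReal.tendsto 0).comp h1
          simpa using h3.const_mul Complex.I
        have h4 := (Complex.continuous_exp.tendsto 0).comp h2
        simpa [Complex.exp_zero, Function.comp_def] using h4
    have : (∫ _ : Ω, (1:ℂ) ∂μ) = 1 := by simp
    rw [this] at key
    convert key using 2 with n
    exact hφ (u n)
  -- zeros propagate toward 0
  have hzero : ∀ a : ℝ, 0 ≤ a → φ a = 0 → ∀ n : ℕ, φ (a / (Real.sqrt 2) ^ n) = 0 := by
    intro a ha h0a
    intro n
    induction n with
    | zero => simpa using h0a
    | succ n ih =>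
      have e : a / (Real.sqrt 2) ^ (n + 1) = (a / (Real.sqrt 2) ^ n) / Real.sqrt 2 := by
        rw [pow_succ]
        field_simp
      rw [e]
      have := hsq (a / (Real.sqrt 2) ^ n)
      rw [ih] at this
      exact mul_self_eq_zero.mp this
  -- main conclusion
  intro t
  refine ⟨him t, ?_⟩
  rcases lt_or_eq_of_le (hnn t) with h | h
  · exact h
  exfalso
  have hφt : φ t = 0 := by
    apply Complex.ext
    · simpa using h.symm
    · simpa using him t
  have hφa : φ |t| = 0 := by rw [habs]; exact hφt
  have hz := hzero |t| (abs_nonneg t) hφa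
  have hu : Tendsto (fun n : ℕ => |t| / (Real.sqrt 2) ^ n) atTop (nhds 0) := by
    have h1 : Tendsto (fun n : ℕ => ((Real.sqrt 2)⁻¹) ^ n) atTop (nhds 0) := by
      apply tendsto_pow_atTop_nhds_zero_of_lt_one
      · positivity
      · rw [inv_lt_one_iff₀]
        right
        nlinarith [Real.sq_sqrt (by norm_num : (0:ℝ) ≤ 2)]
    have := h1.const_mul |t|
    simpa [div_eq_mul_inv, inv_pow] using this
  have hlim := hcont _ hu
  have : (fun n : ℕ => φ (|t| / (Real.sqrt 2) ^ n)) = fun _ => (0:ℂ) := by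
    funext n; exact hz n
  rw [this] at hlim
  have h10 : (1:ℂ) = 0 := tendsto_nhds_unique hlim tendsto_const_nhds
  exact one_ne_zero h10
end
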